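/- Let n ≥ 1. The space of finitely presentable n-parameter persistence modules, metrized with the interleaving distance, is not a Baire space: there exists a countable family of dense open subsets whose intersection is empty. -/

import Mathlib

/-- A pointwise finite dimensional persistence module over a poset `P`, with coefficients in
the field `k`: a functor from `P` to finite dimensional `k`-vector spaces. -/
structure PersMod (k : Type) [Field k] (P : Type) [PartialOrder P] : Type 1 where
  carrier : P → Type
  [addCommGroup : ∀ x, AddCommGroup (carrier x)]
  [module : ∀ x, Module k (carrier x)]
  [fd : ∀ x, FiniteDimensional k (carrier x)]
  map : ∀ {x y : P}, x ≤ y → (carrier x →ₗ[k] carrier y)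
  map_id : ∀ x : P, map (le_refl x) = LinearMap.id
  map_comp : ∀ {x y z : P} (h₁ : x ≤ y) (h₂ : y ≤ z),
      map (h₁.trans h₂) = (map h₂).comp (map h₁)

attribute [instance] PersMod.addCommGroup PersMod.module PersMod.fd

namespace PersMod

section Core

variable {k : Type} [Field k] {P : Type} [PartialOrder P]

/-- A morphism of persistence modules (a natural transformation). -/
structure Hom (M N : PersMod k P) where
  app : ∀ x, M.carrier x →ₗ[k] N.carrier x
  natural : ∀ {x y : P} (h : x ≤ y), (app y).comp (M.map h) = (N.map h).comp (app x)

theorem Hom.ext' {M N : PersMod k P} {f g : Hom M N} (h : ∀ x, f.app x = g.app x) :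
    f = g := by
  cases f; cases g
  have : _ = _ := funext h
  subst this
  rfl

/-- Two persistence modules are isomorphic. -/
def Isom (M N : PersMod k P) : Prop :=
  ∃ (f : Hom M N) (g : Hom N M),
    (∀ x, (g.app x).comp (f.app x) = LinearMap.id) ∧
    (∀ x, (f.app x).comp (g.app x) = LinearMap.id)

/-- The zero persistence module(s). -/
def IsZeroMod (M : PersMod k P) : Prop := ∀ x, Subsingleton (M.carrier x)

/-- The direct sum of two persistence modules. -/
def dsum (M N : PersMod k P) : PersMod k P where
  carrier x := M.carrier x × N.carrier x
  map h := (M.map h).prodMap (N.map h)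
  map_id x := by
    refine LinearMap.ext fun v => ?_
    simp [M.map_id, N.map_id]
  map_comp h₁ h₂ := by
    refine LinearMap.ext fun v => ?_
    simp [M.map_comp h₁ h₂, N.map_comp h₁ h₂]

/-- A persistence module is indecomposable if it is nonzero and in any way of writing it as
a direct sum of two modules, one of the summands is zero. -/
def Indecomposable (M : PersMod k P) : Prop :=
  ¬ IsZeroMod M ∧ ∀ A B : PersMod k P, Isom M (dsum A B) → IsZeroMod A ∨ IsZeroMod B

end Core

section Interleaving

variable {k : Type} [Field k] {n : ℕ}

/-- A point of `ℝⁿ`. -/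
abbrev Pt (n : ℕ) := Fin n → ℝ

/-- The shift of a point of `ℝⁿ` by `ε` in every coordinate. -/
def shiftPt (r : Pt n) (ε : ℝ) : Pt n := fun i => r i + ε

lemma le_shiftPt (r : Pt n) {ε : ℝ} (hε : 0 ≤ ε) : r ≤ shiftPt r ε :=
  fun _ => le_add_of_nonneg_right hε

lemma shiftPt_mono {r s : Pt n} (h : r ≤ s) (ε : ℝ) : shiftPt r ε ≤ shiftPt s ε :=
  fun i => add_le_add (h i) le_rfl

/-- An `ε`-interleaving between two persistence modules over `ℝⁿ`: morphisms
`f : M → N[ε]` and `g : N → M[ε]` whose composites are the `2ε`-shift morphisms. -/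
def Interleaved (M N : PersMod k (Pt n)) (ε : ℝ) : Prop :=
  0 ≤ ε ∧
  ∃ (f : ∀ x : Pt n, M.carrier x →ₗ[k] N.carrier (shiftPt x ε))
    (g : ∀ x : Pt n, N.carrier x →ₗ[k] M.carrier (shiftPt x ε)),
    (∀ (x y : Pt n) (h : x ≤ y),
        (f y).comp (M.map h) = (N.map (shiftPt_mono h ε)).comp (f x)) ∧
    (∀ (x y : Pt n) (h : x ≤ y),
        (g y).comp (N.map h) = (M.map (shiftPt_mono h ε)).comp (g x)) ∧
    (∀ (x : Pt n) (h : x ≤ shiftPt (shiftPt x ε) ε),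
        (g (shiftPt x ε)).comp (f x) = M.map h) ∧
    (∀ (x : Pt n) (h : x ≤ shiftPt (shiftPt x ε) ε),
        (f (shiftPt x ε)).comp (g x) = N.map h)

/-- The interleaving distance, with value `∞` if no interleaving exists. -/
noncomputable def dI (M N : PersMod k (Pt n)) : ENNReal :=
  sInf (ENNReal.ofReal '' {ε : ℝ | Interleaved M N ε})

/-- `M` is `ε`-trivial if all structure maps `M(r) → M(r+ε)` vanish. -/
def EpsTrivial (M : PersMod k (Pt n)) (ε : ℝ) : Prop :=
  0 ≤ ε ∧ ∀ (r : Pt n) (h : r ≤ shiftPt r ε), M.map h = 0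

/-- `M` is strictly `ε`-trivial if it is `ε'`-trivial for some `ε' < ε`. -/
def StrictlyEpsTrivial (M : PersMod k (Pt n)) (ε : ℝ) : Prop :=
  ∃ ε' < ε, EpsTrivial M ε'

/-- `M` is `ε`-indecomposable if it is the direct sum of an indecomposable module and a
strictly `ε`-trivial module. -/
def EpsIndecomposable (M : PersMod k (Pt n)) (ε : ℝ) : Prop :=
  ∃ A B : PersMod k (Pt n), Indecomposable A ∧ StrictlyEpsTrivial B ε ∧ Isom M (dsum A B)

end Interleaving

section FinitelyPresentable

variable {k : Type} [Field k] {P : Type} [PartialOrder P]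

/-- The submodule of `k` underlying the value of the free module `P_q` at `s`:
everything if `q ≤ s`, zero otherwise. -/
noncomputable def pSub (k : Type) [Field k] (q s : P) : Submodule k k :=
  @ite _ (q ≤ s) (Classical.propDecidable _) ⊤ ⊥

lemma pSub_mono (q : P) {s t : P} (h : s ≤ t) : pSub k q s ≤ pSub k q t := by
  unfold pSub
  split_ifs with h1 h2
  · exact le_rfl
  · exact absurd (h1.trans h) h2
  · exact bot_le
  · exact bot_le

/-- The free persistence module `P_q` generated at `q`: it has value `k` at `s ≥ q` and `0`
elsewhere, with identity structure maps wherever possible. -/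
noncomputable def Pmod (k : Type) [Field k] (q : P) : PersMod k P where
  carrier s := ↥(pSub k q s)
  map h := Submodule.inclusion (pSub_mono q h)
  map_id s := rfl
  map_comp h₁ h₂ := rfl

/-- Finite direct sums of persistence modules. -/
def fdsum {ι : Type} [Fintype ι] (Ms : ι → PersMod k P) : PersMod k P where
  carrier x := ∀ i, (Ms i).carrier x
  map h := LinearMap.pi fun i => ((Ms i).map h).comp (LinearMap.proj i)
  map_id x := by
    refine LinearMap.ext fun v => funext fun i => ?_
    simp [(Ms i).map_id]
  map_comp h₁ h₂ := by
    refine LinearMap.ext fun v => funext fun i => ?_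
    simp [(Ms i).map_comp h₁ h₂]

/-- The cokernel of a morphism of persistence modules. -/
noncomputable def cokerMod {M N : PersMod k P} (f : Hom M N) : PersMod k P where
  carrier x := N.carrier x ⧸ LinearMap.range (f.app x)
  map {x y} h := Submodule.mapQ _ _ (N.map h) (by
    rintro v hv
    obtain ⟨w, rfl⟩ := LinearMap.mem_range.mp hv
    simp only [Submodule.mem_comap, LinearMap.mem_range]
    refine ⟨M.map h w, ?_⟩
    have hnat := f.natural h
    calc (f.app y) (M.map h w) = ((f.app y).comp (M.map h)) w := rfl
      _ = ((N.map h).comp (f.app x)) w := by rw [hnat]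
      _ = N.map h (f.app x w) := rfl)
  map_id x := by
    refine LinearMap.ext fun v => ?_
    obtain ⟨w, rfl⟩ := Submodule.Quotient.mk_surjective _ v
    rw [Submodule.mapQ_apply, N.map_id]
    rfl
  map_comp h₁ h₂ := by
    refine LinearMap.ext fun v => ?_
    obtain ⟨w, rfl⟩ := Submodule.Quotient.mk_surjective _ v
    simp [Submodule.mapQ_apply, N.map_comp h₁ h₂]

/-- A persistence module is finitely presentable if it is isomorphic to the cokernel of a
morphism between finite direct sums of free modules `P_p`. -/
def FinitelyPresentable (M : PersMod k P) : Prop :=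
  ∃ (ι κ : Type) (_ : Fintype ι) (_ : Fintype κ) (gp : ι → P) (rp : κ → P)
    (f : Hom (fdsum fun j => Pmod k (rp j)) (fdsum fun i => Pmod k (gp i))),
    Isom M (cokerMod f)

end FinitelyPresentable

end PersMod

open PersMod

namespace NotBaire

open PersMod Submodule LinearMap Module

variable {k : Type} [Field k] {n : ℕ}

section Basic

variable {P : Type} [PartialOrder P]

lemma map_map (M : PersMod k P) {x y z : P} (h₁ : x ≤ y) (h₂ : y ≤ z) (v : M.carrier x) :
    M.map h₂ (M.map h₁ v) = M.map (h₁.trans h₂) v := by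
  rw [M.map_comp h₁ h₂]; rfl

/-- The identity morphism. -/
def homId (M : PersMod k P) : Hom M M :=
  ⟨fun _ => LinearMap.id, fun h => by rw [LinearMap.id_comp, LinearMap.comp_id]⟩

lemma isomRefl (M : PersMod k P) : Isom M M :=
  ⟨homId M, homId M, fun _ => LinearMap.id_comp _, fun _ => LinearMap.id_comp _⟩

lemma pSub_eq_top {q s : P} (h : q ≤ s) : pSub k q s = ⊤ := by
  rw [pSub]; exact if_pos h

lemma pSub_eq_bot {q s : P} (h : ¬ q ≤ s) : pSub k q s = ⊥ := by
  rw [pSub]; exact if_neg h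

lemma pSub_anti {q q' : P} (h : q' ≤ q) (s : P) : pSub k q s ≤ pSub k q' s := by
  unfold pSub
  split_ifs with h1 h2
  · exact le_rfl
  · exact absurd (h.trans h1) h2
  · exact bot_le
  · exact bot_le

lemma cokerMod_map_mk {M N : PersMod k P} (f : Hom M N) {x y : P} (h : x ≤ y)
    (w : N.carrier x) :
    (cokerMod f).map h (Submodule.Quotient.mk w) = Submodule.Quotient.mk (N.map h w) := by
  simp [cokerMod, Submodule.mapQ_apply]
  rfl

lemma finrank_range_comp3_le {V₁ V₂ V₃ V₄ : Type}
    [AddCommGroup V₁] [Module k V₁] [AddCommGroup V₂] [Module k V₂]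
    [AddCommGroup V₃] [Module k V₃] [FiniteDimensional k V₃]
    [AddCommGroup V₄] [Module k V₄]
    (A : V₃ →ₗ[k] V₄) (m : V₂ →ₗ[k] V₃) (B : V₁ →ₗ[k] V₂) :
    finrank k ↥(LinearMap.range (A.comp (m.comp B))) ≤ finrank k ↥(LinearMap.range m) := by
  rw [LinearMap.range_comp]
  exact (Submodule.finrank_map_le A _).trans
    (Submodule.finrank_mono (LinearMap.range_comp_le_range B m))

end Basic

/-- The rank of a structure map. -/
noncomputable def rk (M : PersMod k (Pt n)) {r s : Pt n} (h : r ≤ s) : ℕ :=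
  finrank k ↥(LinearMap.range (M.map h))

/-- The `i`-th dense open set: modules having a structure map of rank at least `i` over a
shift which is positive in every coordinate. -/
def U (k : Type) [Field k] (n i : ℕ) : Set (PersMod k (Pt n)) :=
  {M | ∃ (r s : Pt n) (h : r ≤ s), (∀ j, r j < s j) ∧ i ≤ rk M h}

lemma mem_U_of_isom {i : ℕ} {M N : PersMod k (Pt n)} (hMN : Isom M N)
    (hM : M ∈ U k n i) : N ∈ U k n i := by
  obtain ⟨f, g, hgf, _⟩ := hMN
  obtain ⟨r, s, h, hstrict, hrank⟩ := hM
  have key : M.map h = (g.app s).comp ((N.map h).comp (f.app r)) := by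
    refine LinearMap.ext fun v => ?_
    have e1 := LinearMap.congr_fun (f.natural h) v
    have e2 := LinearMap.congr_fun (hgf s) (M.map h v)
    simp only [LinearMap.comp_apply] at e1 e2 ⊢
    rw [← e1, e2]
    rfl
  refine ⟨r, s, h, hstrict, hrank.trans ?_⟩
  calc rk M h = finrank k ↥(LinearMap.range ((g.app s).comp ((N.map h).comp (f.app r)))) := by
        rw [rk, key]
    _ ≤ rk N h := finrank_range_comp3_le _ _ _

end NotBaire
namespace NotBaire

variable {k : Type} [Field k] {n : ℕ}

open PersMod Submodule LinearMap Module

lemma openness {i : ℕ} (hn : 1 ≤ n) {M : PersMod k (Pt n)} (hM : M ∈ U k n i) :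
    ∃ δ > (0 : ℝ), ∀ N : PersMod k (Pt n), ∀ ε : ℝ,
      Interleaved M N ε → ε < δ → N ∈ U k n i := by
  obtain ⟨r, s, h, hstrict, hrank⟩ := hM
  have hne : (Finset.univ : Finset (Fin n)).Nonempty := ⟨⟨0, hn⟩, Finset.mem_univ _⟩
  set c : ℝ := Finset.univ.inf' hne (fun j => s j - r j) with hcdef
  have hc0 : 0 < c := (Finset.lt_inf'_iff hne).2 fun j _ => sub_pos.2 (hstrict j)
  have hc : ∀ j, c ≤ s j - r j := fun j => Finset.inf'_le _ (Finset.mem_univ j)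
  refine ⟨c / 4, by linarith, ?_⟩
  rintro N ε ⟨hε0, f, g, hf, hg, hgf, hfg⟩ hεδ
  set x : Pt n := shiftPt r ε with hxdef
  set t : ℝ := c - 2 * ε with htdef
  have ht0 : 0 < t := by simp only [htdef]; linarith
  set y : Pt n := shiftPt x t with hydef
  have hxy : x ≤ y := le_shiftPt x ht0.le
  have hps : shiftPt y ε ≤ s := by
    intro j
    have := hc j
    show r j + ε + t + ε ≤ s j
    simp only [htdef]
    linarith
  have key : M.map h = ((M.map hps).comp (g y)).comp ((N.map hxy).comp (f r)) := by
    refine LinearMap.ext fun v => ?_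
    have e1 := LinearMap.congr_fun (hg x y hxy) (f r v)
    have e2 := LinearMap.congr_fun
      (hgf r ((le_shiftPt r hε0).trans (le_shiftPt _ hε0))) v
    simp only [LinearMap.comp_apply] at e1 e2 ⊢
    rw [e1, e2, map_map, map_map]
  refine ⟨x, y, hxy, fun j => by show r j + ε < r j + ε + t; linarith, hrank.trans ?_⟩
  calc rk M h
      = finrank k ↥(LinearMap.range (((M.map hps).comp (g y)).comp ((N.map hxy).comp (f r)))) := by
        rw [rk, key]
    _ ≤ rk N hxy := finrank_range_comp3_le _ _ _

end NotBaire
namespace NotBaire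

open PersMod Submodule LinearMap Module

section Gadget

variable {k : Type} [Field k] {n : ℕ} (i : ℕ) (b : ℝ)
variable {ι κ : Type} [Fintype ι] [Fintype κ] (gp : ι → Pt n) (rp : κ → Pt n)

/-- `b` times the `j`-th basis vector. -/
def bvec (b : ℝ) (j : Fin n) : Pt n := fun l => if l = j then b else 0

lemma bvec_nonneg {b : ℝ} (hb : 0 ≤ b) (j : Fin n) : (0 : Pt n) ≤ bvec b j := by
  intro l
  show (0 : ℝ) ≤ if l = j then b else 0
  split <;> simp [hb]

/-- Generator positions for the augmented presentation. -/
def gp2 : ι ⊕ Fin i → Pt n := Sum.elim gp (fun _ => 0)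

/-- Relation positions for the augmented presentation. -/
def rp2 : κ ⊕ (Fin i × Fin n) → Pt n := Sum.elim rp (fun p => bvec b p.2)

/-- Extension by zero of the generator modules. -/
noncomputable def extInl (x : Pt n) :
    (fdsum fun a : ι => Pmod k (gp a)).carrier x →ₗ[k]
      (fdsum fun a => Pmod k (gp2 i gp a)).carrier x :=
  LinearMap.pi fun a =>
    match a with
    | Sum.inl a => LinearMap.proj a
    | Sum.inr _ => 0

/-- Restriction to the original generators. -/
noncomputable def resInl (x : Pt n) :
    (fdsum fun a => Pmod k (gp2 i gp a)).carrier x →ₗ[k]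
      (fdsum fun a : ι => Pmod k (gp a)).carrier x :=
  LinearMap.pi fun a => LinearMap.proj (Sum.inl a)

/-- Projection onto the new generators (as an endomorphism). -/
noncomputable def inrPart (x : Pt n) :
    (fdsum fun a => Pmod k (gp2 i gp a)).carrier x →ₗ[k]
      (fdsum fun a => Pmod k (gp2 i gp a)).carrier x :=
  LinearMap.pi fun a =>
    match a with
    | Sum.inl _ => 0
    | Sum.inr l => LinearMap.proj (Sum.inr l)

variable (hb : 0 ≤ b)
variable (f₁ : Hom (fdsum fun j => Pmod k (rp j)) (fdsum fun a => Pmod k (gp a)))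

/-- The presentation map of the augmented presentation, at a point. -/
noncomputable def Fapp (x : Pt n) :
    (fdsum fun j => Pmod k (rp2 i b rp j)).carrier x →ₗ[k]
      (fdsum fun a => Pmod k (gp2 i gp a)).carrier x :=
  LinearMap.pi fun a =>
    match a with
    | Sum.inl a =>
        (LinearMap.proj a).comp
          ((f₁.app x).comp (LinearMap.pi fun j => LinearMap.proj (Sum.inl j)))
    | Sum.inr l =>
        ∑ j : Fin n,
          (Submodule.inclusion (pSub_anti (bvec_nonneg hb j) x)).comp
            (LinearMap.proj (Sum.inr (l, j)))

/-- The presentation map of the augmented presentation. -/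
noncomputable def Fhom :
    Hom (fdsum fun j => Pmod k (rp2 i b rp j)) (fdsum fun a => Pmod k (gp2 i gp a)) where
  app := Fapp i b gp rp hb f₁
  natural {x y} h := by
    refine LinearMap.ext fun v => funext fun a => ?_
    cases a with
    | inl a =>
        exact congrFun (LinearMap.congr_fun (f₁.natural h) (fun j => v (Sum.inl j))) a
    | inr l =>
        have lhs_eq : ∀ (z : Pt n) (w : (fdsum fun jj => Pmod k (rp2 i b rp jj)).carrier z),
            (Fapp i b gp rp hb f₁ z) w (Sum.inr l) =
              ∑ j : Fin n,
                Submodule.inclusion (pSub_anti (bvec_nonneg hb j) z) (w (Sum.inr (l, j))) := by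
          intro z w
          show (∑ j : Fin n, (Submodule.inclusion (pSub_anti (bvec_nonneg hb j) z)).comp
              (LinearMap.proj (Sum.inr (l, j)))) w = _
          refine (LinearMap.sum_apply (M := ∀ jj, (Pmod k (rp2 i b rp jj)).carrier z) _ _ _).trans ?_
          rfl
        show (Fapp i b gp rp hb f₁ y) ((fdsum fun jj => Pmod k (rp2 i b rp jj)).map h v)
            (Sum.inr l)
          = (Pmod k (gp2 i gp (Sum.inr l))).map h ((Fapp i b gp rp hb f₁ x) v (Sum.inr l))
        rw [lhs_eq, lhs_eq]
        refine Eq.trans ?_ (map_sum ((Pmod k (gp2 i gp (Sum.inr l))).map h) _ _).symm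
        exact Finset.sum_congr rfl fun j _ => Subtype.ext rfl

/-- The relation-level extension by zero. -/
noncomputable def extKappa (x : Pt n) :
    (fdsum fun j : κ => Pmod k (rp j)).carrier x →ₗ[k]
      (fdsum fun j => Pmod k (rp2 i b rp j)).carrier x :=
  LinearMap.pi fun j =>
    match j with
    | Sum.inl j => LinearMap.proj j
    | Sum.inr _ => 0

lemma Fapp_extKappa (x : Pt n) (v : (fdsum fun j : κ => Pmod k (rp j)).carrier x) :
    Fapp i b gp rp hb f₁ x (extKappa i b rp x v) = extInl i gp x (f₁.app x v) := by
  funext a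
  cases a with
  | inl a => rfl
  | inr l =>
      refine Subtype.ext ?_
      show ((∑ j : Fin n, (Submodule.inclusion (pSub_anti (bvec_nonneg hb j) x)).comp
          (LinearMap.proj (Sum.inr (l, j)))) (extKappa i b rp x v) : k) = ((0 : _) : k)
      refine (congrArg Subtype.val
        (LinearMap.sum_apply (M := ∀ jj, (Pmod k (rp2 i b rp jj)).carrier x) _ _ _)).trans ?_
      rw [AddSubmonoidClass.coe_finset_sum]
      exact Finset.sum_eq_zero fun j _ => rfl

lemma resInl_Fapp (x : Pt n) (u : (fdsum fun j => Pmod k (rp2 i b rp j)).carrier x) :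
    resInl i gp x (Fapp i b gp rp hb f₁ x u)
      = f₁.app x (fun j => u (Sum.inl j)) := rfl

/-- The inclusion of the original cokernel into the augmented one. -/
noncomputable def jm : Hom (cokerMod f₁) (cokerMod (Fhom i b gp rp hb f₁)) where
  app x := Submodule.mapQ _ _ (extInl i gp x) (by
    rintro _ ⟨v, rfl⟩
    exact ⟨extKappa i b rp x v, Fapp_extKappa i b gp rp hb f₁ x v⟩)
  natural {x y} h := by
    refine LinearMap.ext fun v => ?_
    obtain ⟨w, rfl⟩ := Submodule.Quotient.mk_surjective _ v
    show Submodule.Quotient.mk (extInl i gp y ((fdsum fun a : ι => Pmod k (gp a)).map h w))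
        = Submodule.Quotient.mk
            ((fdsum fun a => Pmod k (gp2 i gp a)).map h (extInl i gp x w))
    congr 1
    funext a
    cases a with
    | inl a => rfl
    | inr l => exact Subtype.ext rfl

/-- The projection of the augmented cokernel onto the original one. -/
noncomputable def pm : Hom (cokerMod (Fhom i b gp rp hb f₁)) (cokerMod f₁) where
  app x := Submodule.mapQ _ _ (resInl i gp x) (by
    rintro _ ⟨u, rfl⟩
    exact ⟨fun j => u (Sum.inl j), (resInl_Fapp i b gp rp hb f₁ x u).symm⟩)
  natural {x y} h := by
    refine LinearMap.ext fun v => ?_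
    obtain ⟨w, rfl⟩ := Submodule.Quotient.mk_surjective _ v
    rfl

lemma jm_mk (x : Pt n) (w : (fdsum fun a : ι => Pmod k (gp a)).carrier x) :
    (jm i b gp rp hb f₁).app x (Submodule.Quotient.mk w)
      = Submodule.Quotient.mk (extInl i gp x w) := rfl

lemma pm_mk (x : Pt n) (w : (fdsum fun a => Pmod k (gp2 i gp a)).carrier x) :
    (pm i b gp rp hb f₁).app x (Submodule.Quotient.mk w)
      = Submodule.Quotient.mk (resInl i gp x w) := rfl

lemma qvanish (hn : 1 ≤ n) {x y : Pt n} (h : x ≤ y)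
    (hb2 : x ⟨0, hn⟩ + b ≤ y ⟨0, hn⟩)
    (w : (fdsum fun a => Pmod k (gp2 i gp a)).carrier x) :
    ((fdsum fun a => Pmod k (gp2 i gp a)).map h) (inrPart i gp x w)
      ∈ LinearMap.range (Fapp i b gp rp hb f₁ y) := by
  classical
  by_cases h0 : (0 : Pt n) ≤ x
  · set j0 : Fin n := ⟨0, hn⟩ with hj0
    have hbv : bvec b j0 ≤ y := by
      intro l
      show (if l = j0 then b else 0) ≤ y l
      split_ifs with hl
      · rw [hl]
        have h1 : (0 : ℝ) ≤ x j0 := h0 j0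
        have h2 := hb2
        linarith
      · exact (h0 l).trans (h l)
    let wv : Fin i → k := fun l =>
      ((show ↥(pSub k (gp2 i gp (Sum.inr l)) x) from w (Sum.inr l)) : k)
    let u : ∀ jj, ↥(pSub k (rp2 i b rp jj) y) := fun jj =>
      match jj with
      | Sum.inl _ => 0
      | Sum.inr (l, j) =>
          if hj : j = j0 then
            ⟨wv l, by
              rw [hj]
              show wv l ∈ pSub k (bvec b j0) y
              rw [pSub_eq_top hbv]; trivial⟩
          else 0
    refine ⟨u, ?_⟩
    funext a
    cases a with
    | inl a =>
        have e1 : Fapp i b gp rp hb f₁ y u (Sum.inl a) = 0 := by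
          show f₁.app y (fun j => u (Sum.inl j)) a = 0
          rw [show (fun j => u (Sum.inl j))
              = (0 : (fdsum fun j : κ => Pmod k (rp j)).carrier y) from rfl, map_zero]
          rfl
        have e2 : ((fdsum fun a => Pmod k (gp2 i gp a)).map h) (inrPart i gp x w)
            (Sum.inl a) = 0 := by
          show ((Pmod k (gp2 i gp (Sum.inl a))).map h) (inrPart i gp x w (Sum.inl a)) = 0
          rw [show (inrPart i gp x w (Sum.inl a))
              = (0 : (Pmod k (gp2 i gp (Sum.inl a))).carrier x) from rfl, map_zero]
        rw [e1, e2]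
    | inr l =>
        show Fapp i b gp rp hb f₁ y u (Sum.inr l)
          = ((Pmod k (gp2 i gp (Sum.inr l))).map h) (inrPart i gp x w (Sum.inr l))
        have hL : Fapp i b gp rp hb f₁ y u (Sum.inr l)
            = ∑ j : Fin n,
                Submodule.inclusion (pSub_anti (bvec_nonneg hb j) y) (u (Sum.inr (l, j))) := by
          show (∑ j : Fin n, (Submodule.inclusion (pSub_anti (bvec_nonneg hb j) y)).comp
              (LinearMap.proj (Sum.inr (l, j)))) u = _
          rw [LinearMap.sum_apply]
          rfl
        rw [hL, Finset.sum_eq_single j0]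
        · have h6 : u (Sum.inr (l, j0)) = ⟨wv l, by
              show wv l ∈ pSub k (bvec b j0) y
              rw [pSub_eq_top hbv]; trivial⟩ := dif_pos rfl
          rw [h6]
          exact Subtype.ext rfl
        · intro j _ hj
          have h5 : u (Sum.inr (l, j)) = 0 := dif_neg hj
          rw [h5]
          exact Subtype.ext rfl
        · intro hmem
          exact absurd (Finset.mem_univ j0) hmem
  · have hw : inrPart i gp x w = 0 := by
      funext a
      cases a with
      | inl a => rfl
      | inr l =>
          have hmem := (show ↥(pSub k (gp2 i gp (Sum.inr l)) x) from w (Sum.inr l)).2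
          have hb3 : pSub k (gp2 i gp (Sum.inr l)) x = ⊥ := pSub_eq_bot h0
          exact Subtype.ext ((Submodule.eq_bot_iff _).1 hb3 _ hmem)
    rw [hw, map_zero]
    exact zero_mem _

end Gadget

end NotBaire
namespace NotBaire

open PersMod Submodule LinearMap Module

section Gadget2

variable {k : Type} [Field k] {n : ℕ} (i : ℕ) (b : ℝ)
variable {ι κ : Type} [Fintype ι] [Fintype κ] (gp : ι → Pt n) (rp : κ → Pt n)
variable (hb : 0 ≤ b)
variable (f₁ : Hom (fdsum fun j => Pmod k (rp j)) (fdsum fun a => Pmod k (gp a)))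

lemma Fapp_inr (x : Pt n) (u : (fdsum fun j => Pmod k (rp2 i b rp j)).carrier x)
    (l : Fin i) :
    Fapp i b gp rp hb f₁ x u (Sum.inr l)
      = ∑ j : Fin n,
          Submodule.inclusion (pSub_anti (bvec_nonneg hb j) x) (u (Sum.inr (l, j))) := by
  show (∑ j : Fin n, (Submodule.inclusion (pSub_anti (bvec_nonneg hb j) x)).comp
      (LinearMap.proj (Sum.inr (l, j)))) u = _
  refine (LinearMap.sum_apply (M := ∀ jj, (Pmod k (rp2 i b rp jj)).carrier x) _ _ _).trans ?_
  rfl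

/-- Inclusion of `k^i` at a point where all the new generators are alive. -/
noncomputable def toB2 (x : Pt n) (hx : (0 : Pt n) ≤ x) :
    (Fin i → k) →ₗ[k] (fdsum fun a => Pmod k (gp2 i gp a)).carrier x :=
  LinearMap.pi fun a =>
    match a with
    | Sum.inl _ => 0
    | Sum.inr l => LinearMap.codRestrict _ (LinearMap.proj l) (fun c => by
        have htop : pSub k (gp2 i gp (Sum.inr l)) x = ⊤ := pSub_eq_top hx
        rw [htop]; trivial)

/-- Projection onto `k^i` reading off the new coordinates. -/
noncomputable def piMap (x : Pt n) :
    (fdsum fun a => Pmod k (gp2 i gp a)).carrier x →ₗ[k] (Fin i → k) :=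
  LinearMap.pi fun l : Fin i =>
    (Submodule.subtype (pSub k (gp2 i gp (Sum.inr l)) x)).comp
      (LinearMap.proj (Sum.inr l))

lemma gadget_mem_U (hb0 : 0 < b) :
    cokerMod (Fhom i b gp rp hb f₁) ∈ U k n i := by
  classical
  set r : Pt n := fun _ => b / 4 with hrdef
  set s : Pt n := fun _ => b / 2 with hsdef
  have hr0 : (0 : Pt n) ≤ r := fun j => by show (0:ℝ) ≤ b / 4; linarith
  have hrs : r ≤ s := fun j => by show b / 4 ≤ b / 2; linarith
  have hker : LinearMap.range (Fapp i b gp rp hb f₁ s)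
      ≤ LinearMap.ker (piMap i gp s) := by
    rintro _ ⟨u, rfl⟩
    rw [LinearMap.mem_ker]
    funext l
    show (Submodule.subtype (pSub k (gp2 i gp (Sum.inr l)) s))
        (Fapp i b gp rp hb f₁ s u (Sum.inr l)) = 0
    rw [Fapp_inr]
    refine (map_sum (Submodule.subtype (pSub k (gp2 i gp (Sum.inr l)) s)) _ _).trans ?_
    refine Finset.sum_eq_zero fun j _ => ?_
    have hbot : pSub k (rp2 i b rp (Sum.inr (l, j))) s = ⊥ := by
      refine pSub_eq_bot ?_
      intro hle
      have h3 := hle j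
      simp [rp2, bvec] at h3
      have h4 : b ≤ b / 2 := h3
      linarith
    have hu0 : u (Sum.inr (l, j)) = 0 :=
      Subtype.ext ((Submodule.eq_bot_iff _).1 hbot _
        ((show ↥(pSub k (rp2 i b rp (Sum.inr (l, j))) s) from u (Sum.inr (l, j))).2))
    rw [hu0]
    rfl
  have hcomp : (Submodule.liftQ _ (piMap i gp s) hker).comp
      (((cokerMod (Fhom i b gp rp hb f₁)).map hrs).comp
        ((Submodule.mkQ _).comp (toB2 i gp r hr0)))
      = LinearMap.id := by
    refine LinearMap.ext fun v => funext fun l => ?_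
    rfl
  refine ⟨r, s, hrs, fun j => by show b / 4 < b / 2; linarith, ?_⟩
  have hid : i = finrank k
      ↥(LinearMap.range (LinearMap.id (R := k) (M := Fin i → k))) := by
    rw [LinearMap.range_id, finrank_top, Module.finrank_fintype_fun_eq_card,
      Fintype.card_fin]
  rw [rk]
  calc i = finrank k ↥(LinearMap.range (LinearMap.id (R := k) (M := Fin i → k))) := hid
    _ = finrank k ↥(LinearMap.range ((Submodule.liftQ _ (piMap i gp s) hker).comp
        (((cokerMod (Fhom i b gp rp hb f₁)).map hrs).comp
          ((Submodule.mkQ _).comp (toB2 i gp r hr0))))) := by rw [hcomp]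
    _ ≤ _ := finrank_range_comp3_le _ _ _

end Gadget2

end NotBaire
namespace NotBaire

open PersMod Submodule LinearMap Module

section Gadget3

variable {k : Type} [Field k] {n : ℕ} (i : ℕ) (b : ℝ)
variable {ι κ : Type} [Fintype ι] [Fintype κ] (gp : ι → Pt n) (rp : κ → Pt n)
variable (hb : 0 ≤ b)
variable (f₁ : Hom (fdsum fun j => Pmod k (rp j)) (fdsum fun a => Pmod k (gp a)))

lemma gadget_fp : (cokerMod (Fhom i b gp rp hb f₁)).FinitelyPresentable :=
  ⟨_, _, inferInstance, inferInstance, gp2 i gp, rp2 i b rp, Fhom i b gp rp hb f₁,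
    isomRefl _⟩

lemma gadget_interleaved (hn : 1 ≤ n) {M : PersMod k (Pt n)}
    (fiso : Hom M (cokerMod f₁)) (giso : Hom (cokerMod f₁) M)
    (hgf : ∀ x, (giso.app x).comp (fiso.app x) = LinearMap.id)
    (hfg : ∀ x, (fiso.app x).comp (giso.app x) = LinearMap.id) :
    Interleaved M (cokerMod (Fhom i b gp rp hb f₁)) b := by
  classical
  refine ⟨hb, ?_⟩
  refine ⟨fun x => ((cokerMod (Fhom i b gp rp hb f₁)).map (le_shiftPt x hb)).comp
      (((jm i b gp rp hb f₁).app x).comp (fiso.app x)),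
    fun x => (giso.app (shiftPt x b)).comp
      (((cokerMod f₁).map (le_shiftPt x hb)).comp ((pm i b gp rp hb f₁).app x)),
    ?_, ?_, ?_, ?_⟩
  · -- naturality of f
    intro x y h
    refine LinearMap.ext fun m => ?_
    have e1 := LinearMap.congr_fun (fiso.natural h) m
    have e2 := LinearMap.congr_fun ((jm i b gp rp hb f₁).natural h) (fiso.app x m)
    simp only [LinearMap.comp_apply] at e1 e2 ⊢
    rw [e1, e2, map_map, map_map]
  · -- naturality of g
    intro x y h
    refine LinearMap.ext fun ν => ?_
    have e1 := LinearMap.congr_fun ((pm i b gp rp hb f₁).natural h) ν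
    have e2 := LinearMap.congr_fun (giso.natural (shiftPt_mono h b))
      (((cokerMod f₁).map (le_shiftPt x hb)) ((pm i b gp rp hb f₁).app x ν))
    simp only [LinearMap.comp_apply] at e1 e2 ⊢
    rw [e1, ← e2, map_map, map_map]
  · -- g ∘ f = shift
    intro x h
    refine LinearMap.ext fun m => ?_
    obtain ⟨u, hu⟩ := Submodule.Quotient.mk_surjective _ (fiso.app x m)
    simp only [LinearMap.comp_apply]
    rw [← hu, jm_mk, cokerMod_map_mk, pm_mk]
    rw [show resInl i gp (shiftPt x b)
        (((fdsum fun a => Pmod k (gp2 i gp a)).map (le_shiftPt x hb)) (extInl i gp x u))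
        = ((fdsum fun a : ι => Pmod k (gp a)).map (le_shiftPt x hb)) u from rfl]
    rw [cokerMod_map_mk]
    rw [show ((fdsum fun a : ι => Pmod k (gp a)).map (le_shiftPt (shiftPt x b) hb))
        (((fdsum fun a : ι => Pmod k (gp a)).map (le_shiftPt x hb)) u)
        = ((fdsum fun a : ι => Pmod k (gp a)).map h) u from map_map _ _ _ _]
    rw [← cokerMod_map_mk f₁ h u, hu]
    have e3 := LinearMap.congr_fun (fiso.natural h) m
    simp only [LinearMap.comp_apply] at e3
    rw [← e3]
    have e4 := LinearMap.congr_fun (hgf (shiftPt (shiftPt x b) b)) (M.map h m)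
    simp only [LinearMap.comp_apply, LinearMap.id_apply] at e4
    rw [e4]
  · -- f ∘ g = shift
    intro x h
    refine LinearMap.ext fun ν => ?_
    obtain ⟨w, rfl⟩ := Submodule.Quotient.mk_surjective _ ν
    simp only [LinearMap.comp_apply]
    show ((cokerMod (Fhom i b gp rp hb f₁)).map (le_shiftPt (shiftPt x b) hb))
        ((jm i b gp rp hb f₁).app (shiftPt x b) (fiso.app (shiftPt x b) (giso.app (shiftPt x b)
          (((cokerMod f₁).map (le_shiftPt x hb)) ((pm i b gp rp hb f₁).app x
            (Submodule.Quotient.mk w : _ ⧸ LinearMap.range ((Fhom i b gp rp hb f₁).app x)))))))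
      = (cokerMod (Fhom i b gp rp hb f₁)).map h
          (Submodule.Quotient.mk w : _ ⧸ LinearMap.range ((Fhom i b gp rp hb f₁).app x))
    rw [pm_mk, cokerMod_map_mk]
    have e5 := LinearMap.congr_fun (hfg (shiftPt x b))
      (Submodule.Quotient.mk
        (((fdsum fun a : ι => Pmod k (gp a)).map (le_shiftPt x hb))
          (resInl i gp x w)))
    change fiso.app (shiftPt x b) (giso.app (shiftPt x b)
        (Submodule.Quotient.mk (p := LinearMap.range (f₁.app (shiftPt x b)))
          (((fdsum fun a : ι => Pmod k (gp a)).map (le_shiftPt x hb)) (resInl i gp x w))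
          : (cokerMod f₁).carrier (shiftPt x b)))
      = (Submodule.Quotient.mk (p := LinearMap.range (f₁.app (shiftPt x b)))
          (((fdsum fun a : ι => Pmod k (gp a)).map (le_shiftPt x hb)) (resInl i gp x w))
          : (cokerMod f₁).carrier (shiftPt x b)) at e5
    rw [e5, jm_mk, cokerMod_map_mk, cokerMod_map_mk]
    refine (Submodule.Quotient.eq _).2 ?_
    have hA : extInl i gp (shiftPt x b)
        (((fdsum fun a : ι => Pmod k (gp a)).map (le_shiftPt x hb)) (resInl i gp x w))
        = ((fdsum fun a => Pmod k (gp2 i gp a)).map (le_shiftPt x hb))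
            (w - inrPart i gp x w) := by
      funext a
      cases a with
      | inl a =>
          have e6 : (w - inrPart i gp x w) (Sum.inl a) = w (Sum.inl a) := by
            show w (Sum.inl a) - inrPart i gp x w (Sum.inl a) = w (Sum.inl a)
            rw [show inrPart i gp x w (Sum.inl a)
                = (0 : (Pmod k (gp2 i gp (Sum.inl a))).carrier x) from rfl, sub_zero]
          show ((Pmod k (gp2 i gp (Sum.inl a))).map (le_shiftPt x hb)) (w (Sum.inl a))
            = ((Pmod k (gp2 i gp (Sum.inl a))).map (le_shiftPt x hb))
                ((w - inrPart i gp x w) (Sum.inl a))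
          rw [e6]
      | inr l =>
          have e7 : (w - inrPart i gp x w) (Sum.inr l) = 0 := by
            show w (Sum.inr l) - inrPart i gp x w (Sum.inr l) = 0
            rw [show inrPart i gp x w (Sum.inr l) = w (Sum.inr l) from rfl, sub_self]
          show (0 : (Pmod k (gp2 i gp (Sum.inr l))).carrier (shiftPt x b))
            = ((Pmod k (gp2 i gp (Sum.inr l))).map (le_shiftPt x hb))
                ((w - inrPart i gp x w) (Sum.inr l))
          rw [e7, map_zero]
    rw [hA]
    rw [show ((fdsum fun a => Pmod k (gp2 i gp a)).map (le_shiftPt (shiftPt x b) hb))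
        (((fdsum fun a => Pmod k (gp2 i gp a)).map (le_shiftPt x hb))
          (w - inrPart i gp x w))
        = ((fdsum fun a => Pmod k (gp2 i gp a)).map h) (w - inrPart i gp x w)
        from map_map _ _ _ _]
    rw [map_sub, sub_sub_cancel_left]
    refine neg_mem ?_
    exact qvanish i b gp rp hb f₁ hn h
      (by show x ⟨0, hn⟩ + b ≤ x ⟨0, hn⟩ + b + b; linarith) w

end Gadget3

lemma density {k : Type} [Field k] {n : ℕ} (hn : 1 ≤ n) (i : ℕ) (M : PersMod k (Pt n))
    (hM : M.FinitelyPresentable) {η : ℝ} (hη : 0 < η) :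
    ∃ N : PersMod k (Pt n), N.FinitelyPresentable ∧ N ∈ U k n i ∧
      Interleaved M N (η / 2) := by
  obtain ⟨ι, κ, iι, iκ, gp, rp, f₁, fiso, giso, hgf, hfg⟩ := hM
  have hb : (0 : ℝ) ≤ η / 2 := by linarith
  have hb0 : (0 : ℝ) < η / 2 := by linarith
  exact ⟨cokerMod (@Fhom k _ n i (η / 2) ι κ iι iκ gp rp hb f₁),
    @gadget_fp k _ n i (η / 2) ι κ iι iκ gp rp hb f₁,
    @gadget_mem_U k _ n i (η / 2) ι κ iι iκ gp rp hb f₁ hb0,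
    @gadget_interleaved k _ n i (η / 2) ι κ iι iκ gp rp hb f₁ hn M fiso giso hgf hfg⟩

end NotBaire

/-- The space of finitely presentable `n`-parameter persistence modules with the
interleaving distance is not a Baire space: there is a countable family of dense open
(isomorphism-invariant) subsets with empty intersection. -/
theorem not_baire (k : Type) [Field k] (n : ℕ) (hn : 1 ≤ n) :
    ∃ U : ℕ → Set (PersMod k (Pt n)),
      (∀ i, ∀ M N : PersMod k (Pt n), Isom M N → M ∈ U i → N ∈ U i) ∧
      (∀ i, ∀ M : PersMod k (Pt n), M.FinitelyPresentable → M ∈ U i →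
        ∃ δ > (0 : ℝ), ∀ N : PersMod k (Pt n), N.FinitelyPresentable →
          dI M N < ENNReal.ofReal δ → N ∈ U i) ∧
      (∀ i, ∀ M : PersMod k (Pt n), M.FinitelyPresentable → ∀ η : ℝ, 0 < η →
        ∃ N : PersMod k (Pt n), N.FinitelyPresentable ∧ N ∈ U i ∧
          dI M N < ENNReal.ofReal η) ∧
      ¬ ∃ M : PersMod k (Pt n), M.FinitelyPresentable ∧ ∀ i, M ∈ U i := by
  classical
  refine ⟨fun i => NotBaire.U k n i, ?_, ?_, ?_, ?_⟩
  · intro i M N hMN hM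
    exact NotBaire.mem_U_of_isom hMN hM
  · intro i M _ hM
    obtain ⟨δ, hδ0, hδ⟩ := NotBaire.openness hn hM
    refine ⟨δ, hδ0, ?_⟩
    intro N _ hdI
    rw [dI] at hdI
    obtain ⟨d, hd, hlt⟩ := sInf_lt_iff.1 hdI
    obtain ⟨ε, hεI, rfl⟩ := hd
    exact hδ N ε hεI ((ENNReal.ofReal_lt_ofReal_iff hδ0).1 hlt)
  · intro i M hM η hη
    obtain ⟨N, hNfp, hNU, hNint⟩ := NotBaire.density hn i M hM hη
    refine ⟨N, hNfp, hNU, ?_⟩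
    have h1 : dI M N ≤ ENNReal.ofReal (η / 2) := sInf_le ⟨η / 2, hNint, rfl⟩
    exact lt_of_le_of_lt h1 ((ENNReal.ofReal_lt_ofReal_iff hη).2 (by linarith))
  · rintro ⟨M, hMfp, hMall⟩
    obtain ⟨ι, κ, iι, iκ, gp, rp, f₁, fiso, giso, hgf, hfg⟩ := hMfp
    obtain ⟨r, s, h, hstrict, hrank⟩ := hMall (Fintype.card ι + 1)
    have e : M.carrier s ≃ₗ[k] (cokerMod f₁).carrier s :=
      LinearEquiv.ofLinear (fiso.app s) (giso.app s) (hfg s) (hgf s)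
    have hdim : Module.finrank k (M.carrier s) ≤ Fintype.card ι := by
      rw [e.finrank_eq]
      have h2 : Module.finrank k ((cokerMod f₁).carrier s)
          ≤ Module.finrank k ((@fdsum k _ _ _ ι iι fun a : ι => Pmod k (gp a)).carrier s) :=
        Submodule.finrank_quotient_le _
      refine h2.trans ?_
      have h3 : Module.finrank k ((@fdsum k _ _ _ ι iι fun a : ι => Pmod k (gp a)).carrier s)
          = ∑ a : ι, Module.finrank k ((Pmod k (gp a)).carrier s) :=
        Module.finrank_pi_fintype k
      rw [h3]
      calc ∑ a : ι, Module.finrank k ((Pmod k (gp a)).carrier s)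
          ≤ ∑ _a : ι, 1 :=
            Finset.sum_le_sum fun a _ =>
              (Submodule.finrank_le _).trans (le_of_eq (Module.finrank_self k))
        _ = Fintype.card ι := by simp
    have hcontr : Fintype.card ι + 1 ≤ Fintype.card ι := by
      refine hrank.trans (le_trans ?_ hdim)
      rw [NotBaire.rk]
      exact Submodule.finrank_le _
    omega
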